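/- For the Replace Random task with one-step generation (k = n) under temperature sampling from the true marginals, the success probability is Acc(n) = ((n-1)/n)^{n-1}, and lim_{n→∞} Acc(n) = 1/e. -/

import Mathlib

open Finset Classical

/-- For the Replace Random task with one-step generation (`k = n`) under
temperature sampling from the true marginals, each of the `n` positions independently
replaces its item with `F` with probability `1/n` (indicator `ω i = true`) and keeps it with
probability `(n-1)/n`. Success requires exactly one replacement; its probability is
`Acc(n) = ((n-1)/n)^(n-1)`, and `Acc(n) → 1/e` as `n → ∞`. -/

theorem stmt_17 (n : ℕ) (hn : 0 < n) :
    (∑ ω : Fin n → Bool,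
        if (∃! i : Fin n, ω i = true)
        then ∏ i, (if ω i then (1 : ℝ) / n else ((n : ℝ) - 1) / n) else 0)
      = (((n : ℝ) - 1) / n) ^ (n - 1)
    ∧ Filter.Tendsto (fun n : ℕ => (((n : ℝ) - 1) / n) ^ (n - 1))
        Filter.atTop (nhds (Real.exp 1)⁻¹) := by
  constructor
  · rw [← Finset.sum_filter]
    have hset : Finset.univ.filter (fun ω : Fin n → Bool => ∃! i, ω i = true)
        = Finset.univ.image (fun i : Fin n => fun j => decide (j = i)) := by
      ext ω
      simp only [Finset.mem_filter, Finset.mem_univ, true_and, Finset.mem_image]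
      constructor
      · rintro ⟨i, hi, hu⟩
        refine ⟨i, ?_⟩
        funext j
        by_cases h : j = i
        · simp [h, hi]
        · simp only [decide_eq_false h]
          cases hωj : ω j with
          | false => rfl
          | true => exact absurd (hu j hωj) h
      · rintro ⟨i, rfl⟩
        exact ⟨i, by simp, fun j hj => by simpa using hj⟩
    rw [hset, Finset.sum_image (by
      intro a _ b _ h
      have := congrFun h a
      simpa using this)]
    have hterm : ∀ i : Fin n, ∏ j, (if (fun j => decide (j = i)) j then (1 : ℝ) / n
        else ((n : ℝ) - 1) / n) = (1 / n) * (((n : ℝ) - 1) / n) ^ (n - 1) := by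
      intro i
      rw [← Finset.mul_prod_erase Finset.univ _ (Finset.mem_univ i)]
      simp only [decide_eq_true_eq]
      rw [if_true]
      congr 1
      rw [Finset.prod_congr rfl (fun j hj => by
        rw [if_neg (by simpa using (Finset.mem_erase.mp hj).1)]),
        Finset.prod_const, Finset.card_erase_of_mem (Finset.mem_univ i),
        Finset.card_univ, Fintype.card_fin]
    rw [Finset.sum_congr rfl (fun i _ => hterm i), Finset.sum_const, Finset.card_univ,
      Fintype.card_fin, nsmul_eq_mul]
    have hn' : (n : ℝ) ≠ 0 := Nat.cast_ne_zero.mpr hn.ne'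
    field_simp
  · rw [← Filter.tendsto_add_atTop_iff_nat 1]
    have h := (Real.tendsto_one_add_div_pow_exp 1).inv₀ (Real.exp_ne_zero 1)
    refine h.congr (fun m => ?_)
    rcases Nat.eq_zero_or_pos m with rfl | hm
    · norm_num
    · have hm' : (m : ℝ) ≠ 0 := Nat.cast_ne_zero.mpr hm.ne'
      have : (1 + 1 / (m : ℝ)) = (((m : ℝ) + 1 - 1) / ((m : ℝ) + 1))⁻¹ := by
        field_simp
        rw [add_sub_cancel_right, div_self hm']
      rw [Nat.add_sub_cancel]
      push_cast
      rw [this, ← inv_pow, inv_inv]
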